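/- Let G be a finite simple graph whose vertex set is partitioned into two nonempty sets V and C such that every edge of G joins a vertex of V to a vertex of C, every vertex of V has degree d_v ≥ 2, and every vertex of C has degree d_c ≥ 2. If the girth of G is at least g (for an integer g ≥ 2), then |V| ≥ ((d_v − 1)(d_c − 1))^{⌊(g−2)/4⌋}. -/

import Mathlib

section Aux

variable {α : Type*} [DecidableEq α] {G : SimpleGraph α}

lemma aux_isPath_concat {u v w : α} {p : G.Walk u v} (hp : p.IsPath) (h : G.Adj v w)
    (hw : w ∉ p.support) : (p.concat h).IsPath := by
  rw [← SimpleGraph.Walk.isPath_reverse_iff, SimpleGraph.Walk.reverse_concat]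
  exact SimpleGraph.Walk.IsPath.cons hp.reverse
    (by simpa [SimpleGraph.Walk.support_reverse] using hw)

lemma aux_unique_edge : ∀ {u w : α} (p : G.Walk u w), p.IsPath →
    ∀ x y, s(x, w) ∈ p.edges → s(y, w) ∈ p.edges → x = y := by
  intro u w p
  induction p with
  | nil => simp
  | @cons u b w h q ih =>
    intro hp x y hx hy
    have hq : q.IsPath := ((SimpleGraph.Walk.cons_isPath_iff _ _).mp hp).1
    have hu : u ∉ q.support := ((SimpleGraph.Walk.cons_isPath_iff _ _).mp hp).2
    rw [SimpleGraph.Walk.edges_cons, List.mem_cons] at hx hy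
    have key : ∀ z : α, s(z, w) = s(u, b) → z = u ∧ w = b := by
      intro z hz
      rw [Sym2.eq_iff] at hz
      rcases hz with ⟨h1, h2⟩ | ⟨h1, h2⟩
      · exact ⟨h1, h2⟩
      · exact absurd (h2 ▸ q.end_mem_support) hu
    rcases hx with hx | hx
    · obtain ⟨hxu, hwb⟩ := key x hx
      subst hwb
      have qnil : q = SimpleGraph.Walk.nil := SimpleGraph.Walk.isPath_iff_eq_nil.mp hq
      rcases hy with hy | hy
      · exact hxu.trans ((key y hy).1).symm
      · rw [qnil] at hy; simp at hy
    · rcases hy with hy | hy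
      · obtain ⟨hyu, hwb⟩ := key y hy
        subst hwb
        have qnil : q = SimpleGraph.Walk.nil := SimpleGraph.Walk.isPath_iff_eq_nil.mp hq
        rw [qnil] at hx; simp at hx
      · exact ih hq x y hx hy

lemma aux_two_paths : ∀ (n : ℕ) {u w : α} (p q : G.Walk u w),
    p.length + q.length ≤ n → p.IsPath → q.IsPath → p ≠ q →
    ∃ (a : α) (c : G.Walk a a), c.IsCycle ∧ c.length ≤ p.length + q.length := by
  intro n
  induction n with
  | zero =>
    intro u w p q hl hp hq hne
    cases p with
    | nil => exact absurd (SimpleGraph.Walk.isPath_iff_eq_nil.mp hq).symm hne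
    | cons h p' => simp [SimpleGraph.Walk.length_cons] at hl
  | succ n ih =>
    intro u w p q hl hp hq hne
    cases p with
    | nil => exact absurd (SimpleGraph.Walk.isPath_iff_eq_nil.mp hq).symm hne
    | @cons _ a _ h p' =>
      cases q with
      | nil =>
        have := SimpleGraph.Walk.isPath_iff_eq_nil.mp hp
        simp at this
      | @cons _ b _ h' q' =>
        have hp' : p'.IsPath := ((SimpleGraph.Walk.cons_isPath_iff _ _).mp hp).1
        have hq' : q'.IsPath := ((SimpleGraph.Walk.cons_isPath_iff _ _).mp hq).1
        have hup : u ∉ p'.support := ((SimpleGraph.Walk.cons_isPath_iff _ _).mp hp).2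
        have huq : u ∉ q'.support := ((SimpleGraph.Walk.cons_isPath_iff _ _).mp hq).2
        by_cases hab : a = b
        · subst hab
          have hne' : p' ≠ q' := by
            intro hh
            exact hne (by rw [hh])
          have hlen : p'.length + q'.length ≤ n := by
            simp only [SimpleGraph.Walk.length_cons] at hl; omega
          obtain ⟨x, c, hc, hcl⟩ := ih p' q' hlen hp' hq' hne'
          exact ⟨x, c, hc, by simp only [SimpleGraph.Walk.length_cons]; omega⟩
        · set r := (p'.append q'.reverse).bypass with hr
          have hrp : r.IsPath := SimpleGraph.Walk.bypass_isPath _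
          have hur : u ∉ r.support := by
            intro hmem
            have h2 := SimpleGraph.Walk.support_bypass_subset _ hmem
            rw [SimpleGraph.Walk.mem_support_append_iff] at h2
            rcases h2 with h1 | h1
            · exact hup h1
            · rw [SimpleGraph.Walk.support_reverse, List.mem_reverse] at h1
              exact huq h1
          have hrr : (r.concat h'.symm).IsPath := aux_isPath_concat hrp h'.symm hur
          have hedge : s(u, a) ∉ (r.concat h'.symm).edges := by
            intro hmem
            rw [SimpleGraph.Walk.edges_concat, List.concat_eq_append, List.mem_append] at hmem
            rcases hmem with hmem | hmem
            · exact hur (SimpleGraph.Walk.fst_mem_support_of_mem_edges r hmem)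
            · simp only [List.mem_singleton, Sym2.eq_iff] at hmem
              rcases hmem with ⟨h1, h2⟩ | ⟨h1, h2⟩
              · exact h'.ne h1
              · exact hab h2
          have hcyc : (SimpleGraph.Walk.cons h (r.concat h'.symm)).IsCycle :=
            (SimpleGraph.Walk.cons_isCycle_iff _ h).mpr ⟨hrr, hedge⟩
          refine ⟨u, _, hcyc, ?_⟩
          have h1 := SimpleGraph.Walk.length_bypass_le (p'.append q'.reverse)
          rw [← hr, SimpleGraph.Walk.length_append, SimpleGraph.Walk.length_reverse] at h1
          simp only [SimpleGraph.Walk.length_cons, SimpleGraph.Walk.length_concat]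
          omega

end Aux

namespace BLBaux

variable {α : Type*} [Fintype α] [DecidableEq α] (G : SimpleGraph α) [DecidableRel G.Adj]

noncomputable local instance (v : α) : DecidableEq (Σ w : α, G.Walk v w) :=
  Classical.decEq _

/-- The finset of one-step path extensions of a walk from `v`. -/
noncomputable def ext (v : α) (s : Σ w : α, G.Walk v w) : Finset (Σ w : α, G.Walk v w) :=
  ((G.neighborFinset s.1).filter (fun x => x ∉ s.2.support)).attach.image
    fun x => ⟨x.1, s.2.concat (by
      have hx := Finset.mem_filter.mp x.2
      exact (SimpleGraph.mem_neighborFinset G s.1 x.1).mp hx.1)⟩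

/-- The finset of paths of length `n` from `v` (as sigma pairs endpoint-walk). -/
noncomputable def S (v : α) : ℕ → Finset (Σ w : α, G.Walk v w)
  | 0 => {⟨v, SimpleGraph.Walk.nil⟩}
  | (n+1) => (S v n).biUnion (ext G v)

lemma mem_ext_iff (v : α) (s a : Σ w : α, G.Walk v w) :
    a ∈ ext G v s ↔ ∃ h : G.Adj s.1 a.1, a.1 ∉ s.2.support ∧ a.2 = s.2.concat h := by
  constructor
  · intro h
    simp only [ext, Finset.mem_image] at h
    obtain ⟨x, _, rfl⟩ := h
    have hx2 := Finset.mem_filter.mp x.2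
    exact ⟨(SimpleGraph.mem_neighborFinset G s.1 x.1).mp hx2.1, hx2.2, rfl⟩
  · rintro ⟨h, hns, heq⟩
    obtain ⟨a1, a2⟩ := a
    simp only at h hns heq
    subst heq
    simp only [ext, Finset.mem_image]
    exact ⟨⟨a1, Finset.mem_filter.mpr ⟨(SimpleGraph.mem_neighborFinset G s.1 a1).mpr h, hns⟩⟩,
      Finset.mem_attach _ _, rfl⟩

lemma ext_disjoint (v : α) {s t : Σ w : α, G.Walk v w} (hne : s ≠ t) :
    Disjoint (ext G v s) (ext G v t) := by
  rw [Finset.disjoint_left]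
  intro a has hat
  apply hne
  obtain ⟨hs, hns, heqs⟩ := (mem_ext_iff G v s a).mp has
  obtain ⟨ht, hnt, heqt⟩ := (mem_ext_iff G v t a).mp hat
  obtain ⟨ws, ps⟩ := s
  obtain ⟨wt, pt⟩ := t
  have hcc : ps.concat hs = pt.concat ht := heqs.symm.trans heqt
  obtain ⟨hv, hcopy⟩ := SimpleGraph.Walk.concat_inj hcc
  subst hv
  rw [SimpleGraph.Walk.copy_rfl_rfl] at hcopy
  rw [hcopy]

lemma ext_card (v : α) (s : Σ w : α, G.Walk v w) :
    (ext G v s).card = ((G.neighborFinset s.1).filter (fun x => x ∉ s.2.support)).card := by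
  rw [ext, Finset.card_image_of_injective _ ?_, Finset.card_attach]
  intro x y hxy
  exact Subtype.ext (congrArg Sigma.fst hxy)

lemma mem_S (v : α) : ∀ (n : ℕ) (s : Σ w : α, G.Walk v w),
    s ∈ S G v n → s.2.IsPath ∧ s.2.length = n := by
  intro n
  induction n with
  | zero =>
    intro s hs
    rw [S, Finset.mem_singleton] at hs
    subst hs
    exact ⟨SimpleGraph.Walk.IsPath.nil, rfl⟩
  | succ n ih =>
    intro s hs
    rw [S, Finset.mem_biUnion] at hs
    obtain ⟨t, ht, hst⟩ := hs
    obtain ⟨ht1, ht2⟩ := ih t ht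
    obtain ⟨h, hns, heq⟩ := (mem_ext_iff G v t s).mp hst
    constructor
    · rw [heq]; exact aux_isPath_concat ht1 h hns
    · rw [heq, SimpleGraph.Walk.length_concat, ht2]

lemma card_S_succ (v : α) (n : ℕ) (m : ℕ)
    (hdeg : ∀ s ∈ S G v n,
      m ≤ ((G.neighborFinset s.1).filter (fun x => x ∉ s.2.support)).card) :
    m * (S G v n).card ≤ (S G v (n+1)).card := by
  rw [S, Finset.card_biUnion (fun s _ t _ hst => ext_disjoint G v hst)]
  calc m * (S G v n).card = (S G v n).card • m := by rw [smul_eq_mul, mul_comm]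
    _ ≤ ∑ s ∈ S G v n, (ext G v s).card := by
        apply Finset.card_nsmul_le_sum
        intro s hs
        rw [ext_card]
        exact hdeg s hs

end BLBaux

/-- **Lemma 1 (lower bound).** If a finite simple graph is bipartite with parts `V` and `C`
(both nonempty), every vertex in `V` has degree `d_v ≥ 2`, every vertex in `C` has degree
`d_c ≥ 2`, and the girth is at least `g ≥ 2`, then `|V| ≥ ((d_v−1)(d_c−1))^⌊(g−2)/4⌋`. -/
theorem blocklength_lower_bound_of_girth
    {α : Type*} [Fintype α] [DecidableEq α] (G : SimpleGraph α) [DecidableRel G.Adj]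
    (V C : Finset α) (hV : V.Nonempty) (hC : C.Nonempty)
    (hdisj : Disjoint V C) (hcover : V ∪ C = Finset.univ)
    (hbip : ∀ a b : α, G.Adj a b → (a ∈ V ∧ b ∈ C) ∨ (a ∈ C ∧ b ∈ V))
    (d_v d_c : ℕ) (hdv : 2 ≤ d_v) (hdc : 2 ≤ d_c)
    (hdegV : ∀ v ∈ V, G.degree v = d_v)
    (hdegC : ∀ c ∈ C, G.degree c = d_c)
    (g : ℕ) (hg : 2 ≤ g) (hgirth : (g : ℕ∞) ≤ G.girth) :
    ((d_v - 1) * (d_c - 1)) ^ ((g - 2) / 4) ≤ V.card := by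
  classical
  obtain ⟨v, hv⟩ := hV
  set k := (g - 2) / 4 with hk
  have hk4 : 4 * k + 2 ≤ g := by
    have := Nat.div_mul_le_self (g - 2) 4
    omega
  -- every cycle has length at least g
  have hgn : g ≤ G.girth := by exact_mod_cast hgirth
  have hcyc : ∀ (a : α) (c : G.Walk a a), c.IsCycle → g ≤ c.length := by
    intro a c hc
    have h1 : G.egirth ≤ (c.length : ℕ∞) := by
      apply iInf_le_of_le a
      apply iInf_le_of_le c
      exact iInf_le _ hc
    have h2 : G.girth ≤ c.length := by
      have := ENat.toNat_le_toNat h1 (by simp)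
      simpa [SimpleGraph.girth] using this
    omega
  -- partition facts
  have hVC : ∀ y : α, y ∈ V ↔ y ∉ C := by
    intro y
    constructor
    · intro h1 h2; exact Finset.disjoint_left.mp hdisj h1 h2
    · intro h1
      have : y ∈ V ∪ C := hcover ▸ Finset.mem_univ y
      rcases Finset.mem_union.mp this with h | h
      · exact h
      · exact absurd h h1
  -- parity of walks
  have hparVC : ∀ {x y : α} (p : G.Walk x y),
      (x ∈ V → (Even p.length ↔ y ∈ V)) ∧ (x ∈ C → (Even p.length ↔ y ∈ C)) := by
    intro x y p
    induction p with
    | nil => simp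
    | @cons x a y h q ih =>
      constructor
      · intro hx
        have ha : a ∈ C := by
          rcases hbip x a h with ⟨_, h2⟩ | ⟨h1, _⟩
          · exact h2
          · exact absurd h1 (Finset.disjoint_left.mp hdisj hx)
        rw [SimpleGraph.Walk.length_cons, Nat.even_add_one, ih.2 ha]
        exact (hVC y).symm
      · intro hx
        have ha : a ∈ V := by
          rcases hbip x a h with ⟨h1, _⟩ | ⟨_, h2⟩
          · exact absurd hx (Finset.disjoint_left.mp hdisj h1)
          · exact h2
        rw [SimpleGraph.Walk.length_cons, Nat.even_add_one, ih.1 ha]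
        constructor
        · intro hy; by_contra hc2; exact hy ((hVC y).mpr hc2)
        · intro hy hy2; exact Finset.disjoint_left.mp hdisj hy2 hy
  -- key girth-based degree bound for extensions
  have hstep : ∀ (n : ℕ), n + 2 ≤ g → ∀ s ∈ BLBaux.S G v n,
      G.degree s.1 - 1 ≤ ((G.neighborFinset s.1).filter (fun x => x ∉ s.2.support)).card := by
    intro n hn s hs
    obtain ⟨hsp, hslen⟩ := BLBaux.mem_S G v n s hs
    have hL : ∀ x : α, G.Adj s.1 x → x ∈ s.2.support → s(x, s.1) ∈ s.2.edges := by
      intro x hadj hxs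
      set q := s.2.dropUntil x hxs with hq
      by_cases hmem : s(s.1, x) ∈ q.edges
      · have := SimpleGraph.Walk.edges_dropUntil_subset s.2 hxs hmem
        rwa [Sym2.eq_swap] at this
      · exfalso
        have hqp : q.IsPath := hsp.dropUntil hxs
        have hcy : (SimpleGraph.Walk.cons hadj q).IsCycle :=
          (SimpleGraph.Walk.cons_isCycle_iff q hadj).mpr ⟨hqp, hmem⟩
        have h1 := hcyc _ _ hcy
        have h2 := SimpleGraph.Walk.length_dropUntil_le s.2 hxs
        rw [← hq] at h2
        rw [SimpleGraph.Walk.length_cons] at h1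
        rw [hslen] at h2
        omega
    have hone : ((G.neighborFinset s.1).filter (fun x => x ∈ s.2.support)).card ≤ 1 := by
      apply Finset.card_le_one.mpr
      intro x hx y hy
      obtain ⟨hx1, hx2⟩ := Finset.mem_filter.mp hx
      obtain ⟨hy1, hy2⟩ := Finset.mem_filter.mp hy
      exact aux_unique_edge s.2 hsp x y
        (hL x ((SimpleGraph.mem_neighborFinset G s.1 x).mp hx1) hx2)
        (hL y ((SimpleGraph.mem_neighborFinset G s.1 y).mp hy1) hy2)
    have hsplit := Finset.card_filter_add_card_filter_not
      (s := G.neighborFinset s.1) (p := fun x => x ∈ s.2.support)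
    rw [SimpleGraph.card_neighborFinset_eq_degree] at hsplit
    have : ((G.neighborFinset s.1).filter (fun x => ¬ x ∈ s.2.support)).card
        = ((G.neighborFinset s.1).filter (fun x => x ∉ s.2.support)).card := rfl
    omega
  -- endpoints lie in V at even distance, C at odd distance
  have hend : ∀ (n : ℕ) (s : Σ w : α, G.Walk v w), s ∈ BLBaux.S G v n →
      (Even n → s.1 ∈ V) ∧ (¬ Even n → s.1 ∈ C) := by
    intro n s hs
    obtain ⟨hsp, hslen⟩ := BLBaux.mem_S G v n s hs
    have hiff := (hparVC s.2).1 hv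
    rw [hslen] at hiff
    refine ⟨fun he => hiff.mp he, fun he => ?_⟩
    have hnV : s.1 ∉ V := fun hsV => he (hiff.mpr hsV)
    by_contra hc2
    exact hnV ((hVC s.1).mpr hc2)
  -- the main counting induction
  have hpow : ∀ i : ℕ, 4 * i + 2 ≤ g → ((d_v - 1) * (d_c - 1)) ^ i ≤ (BLBaux.S G v (2 * i)).card := by
    intro i
    induction i with
    | zero => intro _; simp [BLBaux.S]
    | succ i ih =>
      intro hle
      have h1 := ih (by omega)
      have e1 : (d_v - 1) * (BLBaux.S G v (2*i)).card ≤ (BLBaux.S G v (2*i+1)).card := by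
        apply BLBaux.card_S_succ
        intro s hs
        have hdv' : G.degree s.1 = d_v := hdegV s.1 ((hend (2*i) s hs).1 ⟨i, two_mul i⟩)
        have := hstep (2*i) (by omega) s hs
        omega
      have e2 : (d_c - 1) * (BLBaux.S G v (2*i+1)).card ≤ (BLBaux.S G v (2*i+2)).card := by
        apply BLBaux.card_S_succ
        intro s hs
        have hodd : ¬ Even (2*i+1) := by simp [Nat.even_add_one]
        have hdc' : G.degree s.1 = d_c := hdegC s.1 ((hend (2*i+1) s hs).2 hodd)
        have := hstep (2*i+1) (by omega) s hs
        omega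
      have heq2 : 2 * (i+1) = (2*i+1) + 1 := by ring
      rw [heq2]
      calc ((d_v - 1) * (d_c - 1)) ^ (i+1)
          = (d_c - 1) * ((d_v - 1) * ((d_v - 1) * (d_c - 1)) ^ i) := by ring
        _ ≤ (d_c - 1) * ((d_v - 1) * (BLBaux.S G v (2*i)).card) :=
            Nat.mul_le_mul_left _ (Nat.mul_le_mul_left _ h1)
        _ ≤ (d_c - 1) * (BLBaux.S G v (2*i+1)).card := Nat.mul_le_mul_left _ e1
        _ ≤ (BLBaux.S G v ((2*i+1)+1)).card := e2
  -- inject endpoints into V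
  have hfin : (BLBaux.S G v (2*k)).card ≤ V.card := by
    apply Finset.card_le_card_of_injOn (fun s => s.1)
    · intro s hs
      exact (hend (2*k) s (Finset.mem_coe.mp hs)).1 ⟨k, two_mul k⟩
    · intro s hs t ht hst
      obtain ⟨hsp, hslen⟩ := BLBaux.mem_S G v (2*k) s (Finset.mem_coe.mp hs)
      obtain ⟨htp, htlen⟩ := BLBaux.mem_S G v (2*k) t (Finset.mem_coe.mp ht)
      obtain ⟨ws, ps⟩ := s
      obtain ⟨wt, pt⟩ := t
      simp only at hst hslen htlen hsp htp
      subst hst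
      have hpq : ps = pt := by
        by_contra hne
        obtain ⟨a, c, hc, hcl⟩ := aux_two_paths (ps.length + pt.length) ps pt le_rfl hsp htp hne
        have hgc := hcyc a c hc
        omega
      rw [hpq]
  exact le_trans (hpow k hk4) hfin
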